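/- Let H be a finitely generated abelian group, and let π : F → H and π' : F' → H be two surjections from finitely generated free abelian groups of the same rank g, where g is strictly greater than the rank of H. Then the presentations are equivalent: there exists an isomorphism f : F → F' with π' ∘ f = π. -/

import Mathlib

namespace Stmt5
open DirectSum



variable {H : Type} [AddCommGroup H] {g : ℕ}

/-- linear combination map of a tuple. -/
def TL (h : Fin g → H) : (Fin g → ℤ) →ₗ[ℤ] H where
  toFun v := ∑ j, v j • h j
  map_add' v w := by simp [add_smul, Finset.sum_add_distrib]
  map_smul' c v := by simp [mul_smul, Finset.smul_sum]

@[simp] lemma TL_apply (h : Fin g → H) (v : Fin g → ℤ) : TL h v = ∑ j, v j • h j := rfl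

lemma TL_single (h : Fin g → H) (i : Fin g) (c : ℤ) : TL h (Pi.single i c) = c • h i := by
  rw [TL_apply, Finset.sum_eq_single i] <;> simp +contextual [Pi.single_eq_of_ne]

lemma TL_add_single (h : Fin g → H) (i : Fin g) (z : H) (v : Fin g → ℤ) :
    TL (h + Pi.single i z) v = TL h v + v i • z := by
  simp only [TL_apply, Pi.add_apply, smul_add, Finset.sum_add_distrib]
  congr 1
  rw [Finset.sum_eq_single i] <;> simp +contextual [Pi.single_eq_of_ne]

lemma TL_pi (π : (Fin g → ℤ) →+ H) (v : Fin g → ℤ) :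
    TL (fun j => π (Pi.single j 1)) v = π v := by
  conv_rhs => rw [← Finset.univ_sum_single v, map_sum]
  rw [TL_apply]
  refine Finset.sum_congr rfl fun j _ => ?_
  have : (Pi.single j (v j) : Fin g → ℤ) = (v j) • (Pi.single j (1:ℤ) : Fin g → ℤ) := by
    ext l
    by_cases hl : l = j <;> simp [hl, Pi.single_eq_of_ne, Pi.single_apply]
  rw [this, map_zsmul]

/-- Equivalence of presentations given by tuples. -/
def Eqv (h h' : Fin g → H) : Prop :=
  ∃ f : (Fin g → ℤ) ≃ₗ[ℤ] (Fin g → ℤ), ∀ v, TL h' (f v) = TL h v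

lemma Eqv.refl (h : Fin g → H) : Eqv h h := ⟨LinearEquiv.refl ℤ _, fun _ => rfl⟩

lemma Eqv.trans {h₁ h₂ h₃ : Fin g → H} (e1 : Eqv h₁ h₂) (e2 : Eqv h₂ h₃) : Eqv h₁ h₃ := by
  obtain ⟨f1, hf1⟩ := e1; obtain ⟨f2, hf2⟩ := e2
  exact ⟨f1.trans f2, fun v => by simp [LinearEquiv.trans_apply, hf2, hf1]⟩

lemma Eqv.surj {h h' : Fin g → H} (e : Eqv h h') (hs : Function.Surjective (TL h)) :
    Function.Surjective (TL h') := by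
  obtain ⟨f, hf⟩ := e
  intro x
  obtain ⟨v, rfl⟩ := hs x
  exact ⟨f v, hf v⟩

/-- the basic move: add to the `i`-th element an integral combination of the others. -/
lemma eqv_add_single (h : Fin g → H) (i : Fin g) (c : Fin g → ℤ) (hc : c i = 0) :
    Eqv h (h + Pi.single i (TL h c)) := by
  refine ⟨LinearEquiv.ofLinear
      (LinearMap.id - (LinearMap.smulRight (LinearMap.proj i) c))
      (LinearMap.id + (LinearMap.smulRight (LinearMap.proj i) c)) ?_ ?_, ?_⟩
  · ext v j
    simp [hc, mul_add, add_mul]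
  · ext v j
    simp [hc, mul_add, add_mul]
  · intro v
    simp only [LinearEquiv.ofLinear_apply, LinearMap.sub_apply, LinearMap.id_apply,
      LinearMap.smulRight_apply, LinearMap.proj_apply]
    rw [TL_add_single, map_sub, map_smul]
    have : (v - v i • c) i = v i := by simp [hc]
    rw [this]
    abel


section Euclid

variable {k : ℕ} {n : ℕ}

/-- one transvection, tracking the `ZMod k` shadow. -/
lemma step (p : H →+ ZMod k) (h : Fin (n+1) → H) (b : Fin (n+1) → ℤ)
    (hp : ∀ j, p (h j) = (b j : ZMod k)) (i t : Fin (n+1)) (hit : i ≠ t) (c : ℤ) :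
    Eqv h (h + Pi.single i (c • h t)) ∧
      ∀ j, p ((h + Pi.single i (c • h t) : Fin (n+1) → H) j)
        = (((b + Pi.single i (c * b t) : Fin (n+1) → ℤ) j : ℤ) : ZMod k) := by
  constructor
  · have := eqv_add_single h i (Pi.single t c) (by simp [Pi.single_eq_of_ne hit])
    rwa [TL_single] at this
  · intro j
    by_cases hj : j = i
    · subst hj
      simp only [Pi.add_apply, Pi.single_eq_same, map_add, map_zsmul, hp]
      push_cast
      rw [zsmul_eq_mul]
    · simp [Pi.single_eq_of_ne hj, hp]

def S (b : Fin (n+1) → ℤ) : ℕ := ∑ j ∈ Finset.univ.erase 0, (b j).natAbs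

lemma S_single_zero (b : Fin (n+1) → ℤ) (x : ℤ) : S (b + Pi.single 0 x) = S b := by
  refine Finset.sum_congr rfl fun l hl => ?_
  have hl0 : l ≠ 0 := (Finset.mem_erase.mp hl).1
  simp [Pi.single_eq_of_ne hl0]

lemma S_single_ne (b : Fin (n+1) → ℤ) {j : Fin (n+1)} (hj : j ≠ 0) (x : ℤ) :
    S (b + Pi.single j x) + (b j).natAbs = S b + (b j + x).natAbs := by
  have hj' : j ∈ Finset.univ.erase (0 : Fin (n+1)) := Finset.mem_erase.mpr ⟨hj, Finset.mem_univ j⟩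
  rw [S, S, ← Finset.add_sum_erase _ _ hj', ← Finset.add_sum_erase _ _ hj']
  have hcong : ∑ l ∈ (Finset.univ.erase (0 : Fin (n+1))).erase j,
      ((b + Pi.single j x : Fin (n+1) → ℤ) l).natAbs
      = ∑ l ∈ (Finset.univ.erase (0 : Fin (n+1))).erase j, (b l).natAbs := by
    refine Finset.sum_congr rfl fun l hl => ?_
    have : l ≠ j := (Finset.mem_erase.mp hl).1
    simp [Pi.single_eq_of_ne this]
  rw [hcong]
  simp only [Pi.add_apply, Pi.single_eq_same]
  omega

lemma euclid (p : H →+ ZMod k) :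
    ∀ (N : ℕ) {n : ℕ} (h : Fin (n+1) → H) (b : Fin (n+1) → ℤ),
      (∀ j, p (h j) = (b j : ZMod k)) →
      2 * S b + (b 0).natAbs ≤ N →
      ∃ (h' : Fin (n+1) → H) (b0 : ℤ), Eqv h h' ∧
        p (h' 0) = (b0 : ZMod k) ∧ ∀ j, j ≠ 0 → p (h' j) = 0 := by
  have base : ∀ {n : ℕ} (h : Fin (n+1) → H) (b : Fin (n+1) → ℤ),
      (∀ j, p (h j) = (b j : ZMod k)) → (∀ j, j ≠ (0 : Fin (n+1)) → b j = 0) →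
      ∃ (h' : Fin (n+1) → H) (b0 : ℤ), Eqv h h' ∧
        p (h' 0) = (b0 : ZMod k) ∧ ∀ j, j ≠ 0 → p (h' j) = 0 := by
    intro n h b hp hall
    exact ⟨h, b 0, Eqv.refl h, hp 0, fun j hj => by rw [hp j, hall j hj]; simp⟩
  intro N
  induction N with
  | zero =>
    intro n h b hp hN
    refine base h b hp fun j hj => ?_
    have hmem : j ∈ Finset.univ.erase (0 : Fin (n+1)) :=
      Finset.mem_erase.mpr ⟨hj, Finset.mem_univ j⟩
    have hle : (b j).natAbs ≤ S b :=
      Finset.single_le_sum (f := fun l => (b l).natAbs) (fun _ _ => Nat.zero_le _) hmem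
    omega
  | succ N ih =>
    intro n h b hp hN
    by_cases hall : ∀ j, j ≠ (0 : Fin (n+1)) → b j = 0
    · exact base h b hp hall
    · push_neg at hall
      obtain ⟨j0, hj0, hbj0⟩ := hall
      have hmem : j0 ∈ Finset.univ.erase (0 : Fin (n+1)) :=
        Finset.mem_erase.mpr ⟨hj0, Finset.mem_univ j0⟩
      have hle : (b j0).natAbs ≤ S b :=
        Finset.single_le_sum (f := fun l => (b l).natAbs) (fun _ _ => Nat.zero_le _) hmem
      by_cases hb0 : b 0 = 0
      · -- move b j0 into slot 0, then clear slot j0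
        obtain ⟨e1, hp1⟩ := step p h b hp 0 j0 (Ne.symm hj0) 1
        set h1 := h + Pi.single 0 ((1:ℤ) • h j0) with hh1
        set b1 := b + Pi.single 0 (1 * b j0) with hb1
        obtain ⟨e2, hp2⟩ := step p h1 b1 hp1 j0 0 hj0 (-1)
        set h2 := h1 + Pi.single j0 ((-1:ℤ) • h1 0) with hh2
        set b2 := b1 + Pi.single j0 ((-1) * b1 0) with hb2
        have hb10 : b1 0 = b j0 := by simp [hb1, hb0]
        have hb1j0 : b1 j0 = b j0 := by simp [hb1, Pi.single_eq_of_ne hj0]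
        have hS1 : S b1 = S b := S_single_zero b (1 * b j0)
        have hS2 : S b2 + (b1 j0).natAbs = S b1 + (b1 j0 + (-1) * b1 0).natAbs :=
          S_single_ne b1 hj0 _
        have hb20 : b2 0 = b j0 := by
          simp [hb2, Pi.single_eq_of_ne (Ne.symm hj0), hb10]
        have hbound : 2 * S b2 + (b2 0).natAbs ≤ N := by
          rw [hb20]
          rw [hb10, hb1j0, hS1] at hS2
          simp only [neg_one_mul] at hS2
          have : (b j0 + -(b j0)).natAbs = 0 := by simp
          rw [this] at hS2
          rw [hb0] at hN
          simp at hN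
          omega
        obtain ⟨h', b0', e', h0', hrest⟩ := ih h2 b2 hp2 hbound
        exact ⟨h', b0', (e1.trans e2).trans e', h0', hrest⟩
      · by_cases hcmp : (b j0).natAbs ≤ (b 0).natAbs
        · -- reduce slot 0 mod b j0
          obtain ⟨e1, hp1⟩ := step p h b hp 0 j0 (Ne.symm hj0) (-(b 0 / b j0))
          set b1 := b + Pi.single 0 ((-(b 0 / b j0)) * b j0) with hb1
          have hb10 : b1 0 = b 0 % b j0 := by
            simp only [hb1, Pi.add_apply, Pi.single_eq_same]
            rw [Int.emod_def]
            ring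
          have hS1 : S b1 = S b := S_single_zero b _
          have hr1 : 0 ≤ b 0 % b j0 := Int.emod_nonneg _ hbj0
          have hr2 : b 0 % b j0 < |b j0| := by rw [Int.abs_eq_natAbs]; exact Int.emod_lt _ hbj0
          rw [Int.abs_eq_natAbs] at hr2
          have hbound : 2 * S b1 + (b1 0).natAbs ≤ N := by
            rw [hS1, hb10]
            omega
          obtain ⟨h', b0', e', h0', hrest⟩ := ih _ b1 hp1 hbound
          exact ⟨h', b0', e1.trans e', h0', hrest⟩
        · -- reduce slot j0 mod b 0
          obtain ⟨e1, hp1⟩ := step p h b hp j0 0 hj0 (-(b j0 / b 0))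
          set b1 := b + Pi.single j0 ((-(b j0 / b 0)) * b 0) with hb1
          have hb1j0 : b j0 + (-(b j0 / b 0)) * b 0 = b j0 % b 0 := by
            rw [Int.emod_def]; ring
          have hS1 : S b1 + (b j0).natAbs = S b + (b j0 % b 0).natAbs := by
            have := S_single_ne b hj0 ((-(b j0 / b 0)) * b 0)
            rwa [hb1j0] at this
          have hb10 : b1 0 = b 0 := by simp [hb1, Pi.single_eq_of_ne (Ne.symm hj0)]
          have hr1 : 0 ≤ b j0 % b 0 := Int.emod_nonneg _ hb0
          have hr2 : b j0 % b 0 < |b 0| := by rw [Int.abs_eq_natAbs]; exact Int.emod_lt _ hb0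
          rw [Int.abs_eq_natAbs] at hr2
          have hbound : 2 * S b1 + (b1 0).natAbs ≤ N := by
            rw [hb10]
            omega
          obtain ⟨h', b0', e', h0', hrest⟩ := ih _ b1 hp1 hbound
          exact ⟨h', b0', e1.trans e', h0', hrest⟩

end Euclid

lemma step2 {H : Type} [AddCommGroup H] {k n : ℕ} (p : H →+ ZMod k) (h : Fin (n+1) → H)
    (b : Fin (n+1) → ℤ)
    (hp : ∀ j, p (h j) = (b j : ZMod k)) (i t : Fin (n+1)) (hit : i ≠ t) (c : ℤ) :
    ∃ (h' : Fin (n+1) → H) (b' : Fin (n+1) → ℤ),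
      Eqv h h' ∧ (∀ j, p (h' j) = (b' j : ZMod k)) ∧
      (∀ j, j ≠ i → h' j = h j ∧ b' j = b j) ∧
      h' i = h i + c • h t ∧ b' i = b i + c * b t := by
  obtain ⟨e, hp'⟩ := step p h b hp i t hit c
  refine ⟨_, _, e, hp', fun j hj => ?_, by simp, by simp⟩
  constructor <;> simp [Pi.single_eq_of_ne hj]

lemma eqv_add {H : Type} [AddCommGroup H] {g : ℕ} (h : Fin g → H) (i : Fin g)
    (c : Fin g → ℤ) (hc : c i = 0) :
    ∃ h' : Fin g → H, Eqv h h' ∧ (∀ j, j ≠ i → h' j = h j) ∧ h' i = h i + TL h c := by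
  refine ⟨_, eqv_add_single h i c hc, fun j hj => ?_, by simp⟩
  simp [Pi.single_eq_of_ne hj]

section Reduce

variable {k n : ℕ} {G : Type} [AddCommGroup G]

lemma snd_TL (h : Fin g → G × ZMod k) (c : Fin g → ℤ) :
    (TL h c).2 = ∑ j, c j • (h j).2 := by
  rw [TL_apply, Prod.snd_sum]
  simp

lemma fst_TL (h : Fin g → G × ZMod k) (c : Fin g → ℤ) :
    (TL h c).1 = ∑ j, c j • (h j).1 := by
  rw [TL_apply, Prod.fst_sum]
  simp

lemma snd_TL_pattern (h : Fin (n+1) → G × ZMod k) (c : Fin (n+1) → ℤ)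
    (hrest : ∀ j, j ≠ 0 → (h j).2 = 0) :
    (TL h c).2 = (c 0 : ZMod k) * (h 0).2 := by
  rw [snd_TL, Fin.sum_univ_succ]
  have : ∀ i : Fin n, c i.succ • (h i.succ).2 = 0 := by
    intro i
    rw [hrest _ (Fin.succ_ne_zero i), smul_zero]
  simp [this, zsmul_eq_mul]

/-- the tail of a reduced tuple generates `G`. -/
lemma tailgen (hann : ∀ x : G, (k:ℤ) • x = 0) (h : Fin (n+1) → G × ZMod k)
    (hsurj : Function.Surjective (TL h)) {d : ZMod k} (hd : IsUnit d)
    (hrest : ∀ j, j ≠ 0 → (h j).2 = 0) (hd0 : (h 0).2 = d) :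
    Function.Surjective (TL (fun i : Fin n => (h i.succ).1)) := by
  intro x
  obtain ⟨c, hc⟩ := hsurj (x, 0)
  have hsnd : (c 0 : ZMod k) * d = 0 := by
    have := congrArg Prod.snd hc
    rwa [snd_TL_pattern h c hrest, hd0] at this
  have hc0 : ((c 0 : ℤ) : ZMod k) = 0 := by
    obtain ⟨u, hu⟩ := hd
    calc ((c 0 : ℤ) : ZMod k) = (c 0 : ZMod k) * d * ↑u⁻¹ := by
          rw [← hu, mul_assoc]
          simp
      _ = 0 := by rw [hsnd, zero_mul]
  obtain ⟨t, ht⟩ := (ZMod.intCast_zmod_eq_zero_iff_dvd _ _).mp hc0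
  have hfst : x = ∑ j, c j • (h j).1 := by
    have := congrArg Prod.fst hc
    rw [fst_TL] at this
    exact this.symm
  rw [Fin.sum_univ_succ] at hfst
  have hzero : c 0 • (h 0).1 = 0 := by
    rw [ht, mul_smul, hann]
  refine ⟨fun i => c i.succ, ?_⟩
  rw [TL_apply]
  rw [hfst, hzero, zero_add]

/-- core reduction: Euclid + unit extraction. -/
lemma reduce_core (h : Fin (n+1) → G × ZMod k)
    (hsurj : Function.Surjective (TL h)) :
    ∃ (h₁ : Fin (n+1) → G × ZMod k) (b0 : ℤ), Eqv h h₁ ∧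
      (∀ j, j ≠ 0 → (h₁ j).2 = 0) ∧ (h₁ 0).2 = ((b0 : ℤ) : ZMod k) ∧
      IsUnit (((b0 : ℤ) : ZMod k)) := by
  set p : G × ZMod k →+ ZMod k := AddMonoidHom.snd G (ZMod k) with hp
  have hb : ∀ j, ∃ bj : ℤ, ((bj : ℤ) : ZMod k) = (h j).2 := fun j =>
    ZMod.intCast_surjective _
  choose b hbs using hb
  obtain ⟨h₁, b0, e₁, h₁0, h₁rest⟩ := euclid p (2 * S b + (b 0).natAbs) h b (fun j => (hbs j).symm) le_rfl
  have hrest : ∀ j, j ≠ (0 : Fin (n+1)) → (h₁ j).2 = 0 := h₁rest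
  have hsurj₁ : Function.Surjective (TL h₁) := e₁.surj hsurj
  obtain ⟨c, hc⟩ := hsurj₁ (0, 1)
  have h10' : (h₁ 0).2 = ((b0 : ℤ) : ZMod k) := h₁0
  have hone : (c 0 : ZMod k) * (((b0 : ℤ) : ZMod k)) = 1 := by
    have := congrArg Prod.snd hc
    rwa [snd_TL_pattern h₁ c hrest, h10'] at this
  exact ⟨h₁, b0, e₁, hrest, h₁0, IsUnit.of_mul_eq_one _ (mul_comm (c 0 : ZMod k) _ ▸ hone)⟩

/-- drop one generator (no equivalence data). -/
lemma reduce1 (hann : ∀ x : G, (k:ℤ) • x = 0) (h : Fin (n+1) → G × ZMod k)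
    (hsurj : Function.Surjective (TL h)) :
    ∃ w : Fin n → G, Function.Surjective (TL w) := by
  obtain ⟨h₁, b0, e₁, hrest, h10, hunit⟩ := reduce_core h hsurj
  exact ⟨_, tailgen hann h₁ (e₁.surj hsurj) hunit hrest h10⟩

/-- full reduction with equivalence, needs two slots. -/
lemma reduce2 (hann : ∀ x : G, (k:ℤ) • x = 0) (h : Fin (n+2) → G × ZMod k)
    (hsurj : Function.Surjective (TL h)) :
    ∃ (w : Fin (n+1) → G) (F : (Fin (n+2) → ℤ) ≃ₗ[ℤ] (Fin (n+2) → ℤ)),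
      Function.Surjective (TL w) ∧
      ∀ v, TL h v = (TL w (Fin.tail (F v)), (((F v) 0 : ℤ) : ZMod k)) := by
  set p : G × ZMod k →+ ZMod k := AddMonoidHom.snd G (ZMod k) with hpdef
  obtain ⟨h₁, b0, e₁, hrest, h10, hunit⟩ := reduce_core h hsurj
  set d : ZMod k := ((b0 : ℤ) : ZMod k) with hd
  set b₁ : Fin (n+2) → ℤ := Pi.single 0 b0 with hb₁
  have hp₁ : ∀ j, p (h₁ j) = (b₁ j : ZMod k) := by
    intro j
    by_cases hj : j = 0
    · subst hj; show (h₁ 0).2 = ((b₁ 0 : ℤ) : ZMod k); rw [hb₁, Pi.single_eq_same]; exact h10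
    · simp only [hb₁, Pi.single_eq_of_ne hj, Int.cast_zero]
      exact hrest j hj
  obtain ⟨u, hu⟩ := hunit
  have h10ne : (1 : Fin (n+2)) ≠ 0 := by simp [Fin.ext_iff]
  have hb₁0 : b₁ 0 = b0 := by simp [hb₁]
  -- op 1 : slot 1 += c₁ * slot 0, with cast c₁ = u⁻¹(1-d)
  obtain ⟨c₁, hc₁⟩ := ZMod.intCast_surjective ((↑u⁻¹ : ZMod k) * (1 - d))
  obtain ⟨h₂, b₂, e₂, hp₂, hne₂, hi₂, hbi₂⟩ := step2 p h₁ b₁ hp₁ 1 0 h10ne c₁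
  -- op 2 : slot 0 += slot 1
  obtain ⟨h₃, b₃, e₃, hp₃, hne₃, hi₃, hbi₃⟩ := step2 p h₂ b₂ hp₂ 0 1 (Ne.symm h10ne) 1
  -- op 3 : slot 1 += c₂ * slot 0, with cast c₂ = d - 1
  obtain ⟨c₂, hc₂⟩ := ZMod.intCast_surjective (d - 1)
  obtain ⟨h₄, b₄, e₄, hp₄, hne₄, hi₄, hbi₄⟩ := step2 p h₃ b₃ hp₃ 1 0 h10ne c₂
  -- integer values
  have hb₂0 : b₂ 0 = b0 := by rw [(hne₂ 0 (Ne.symm h10ne)).2, hb₁0]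
  have hb₂1 : b₂ 1 = c₁ * b0 := by
    rw [hbi₂, hb₁0]
    simp [hb₁, Pi.single_eq_of_ne h10ne]
  have hb₃0 : b₃ 0 = b0 + c₁ * b0 := by rw [hbi₃, hb₂0, hb₂1]; ring
  have hb₃1 : b₃ 1 = c₁ * b0 := by rw [(hne₃ 1 h10ne).2, hb₂1]
  have hb₄0 : b₄ 0 = b0 + c₁ * b0 := by rw [(hne₄ 0 (Ne.symm h10ne)).2, hb₃0]
  have hb₄1 : b₄ 1 = c₁ * b0 + c₂ * (b0 + c₁ * b0) := by rw [hbi₄, hb₃1, hb₃0]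
  have hcast_c₁d : ((c₁ : ℤ) : ZMod k) * d = 1 - d := by
    rw [hc₁, ← hu]
    calc ((↑u⁻¹ : ZMod k) * (1 - ↑u)) * ↑u = ((↑u⁻¹ : ZMod k) * ↑u) * (1 - ↑u) := by ring
      _ = 1 - ↑u := by rw [Units.inv_mul, one_mul]
  have hb₄0cast : ((b₄ 0 : ℤ) : ZMod k) = 1 := by
    rw [hb₄0]
    push_cast
    rw [← hd, hcast_c₁d]
    ring
  have hb₄1cast : ((b₄ 1 : ℤ) : ZMod k) = 0 := by
    rw [hb₄1]
    push_cast
    rw [← hd, hcast_c₁d, hc₂]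
    ring
  have hb₄rest : ∀ j : Fin (n+2), j ≠ 0 → j ≠ 1 → b₄ j = 0 := by
    intro j hj0 hj1
    rw [(hne₄ j hj1).2, (hne₃ j hj0).2, (hne₂ j hj1).2]
    simp [hb₁, Pi.single_eq_of_ne hj0]
  -- snd values of h₄
  have hsnd₄0 : (h₄ 0).2 = 1 := by
    have : (h₄ 0).2 = ((b₄ 0 : ℤ) : ZMod k) := hp₄ 0
    rw [this, hb₄0cast]
  have hsnd₄rest : ∀ j : Fin (n+2), j ≠ 0 → (h₄ j).2 = 0 := by
    intro j hj0
    have : (h₄ j).2 = ((b₄ j : ℤ) : ZMod k) := hp₄ j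
    rw [this]
    by_cases hj1 : j = 1
    · subst hj1; exact hb₄1cast
    · rw [hb₄rest j hj0 hj1, Int.cast_zero]
  have surj₄ : Function.Surjective (TL h₄) :=
    ((((e₁.trans e₂).trans e₃).trans e₄)).surj hsurj
  set w : Fin (n+1) → G := fun i => (h₄ i.succ).1 with hw
  have hwsurj : Function.Surjective (TL w) :=
    tailgen hann h₄ surj₄ isUnit_one hsnd₄rest hsnd₄0
  obtain ⟨c', hc'⟩ := hwsurj ((h₄ 0).1)
  set cvec : Fin (n+2) → ℤ := Fin.cons 0 (fun i => -(c' i)) with hcvec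
  have hcvec0 : cvec 0 = 0 := rfl
  obtain ⟨h₅, e₅, hne₅, hi₅⟩ := eqv_add h₄ 0 cvec hcvec0
  have hTLcvec : TL h₄ cvec = (-(h₄ 0).1, 0) := by
    refine Prod.ext ?_ ?_
    · rw [fst_TL, Fin.sum_univ_succ]
      simp only [hcvec, Fin.cons_zero, Fin.cons_succ, zero_smul, zero_add, neg_smul]
      rw [Finset.sum_neg_distrib, neg_inj]
      exact (TL_apply w c').symm.trans hc'
    · rw [snd_TL, Fin.sum_univ_succ]
      simp only [hcvec, Fin.cons_zero, Fin.cons_succ, zero_smul, zero_add, neg_smul]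
      have : ∀ i : Fin (n+1), (c' i) • (h₄ i.succ).2 = 0 := fun i => by
        rw [hsnd₄rest _ (Fin.succ_ne_zero i), smul_zero]
      simp [this]
  have hfive0 : h₅ 0 = (0, 1) := by
    rw [hi₅, hTLcvec]
    refine Prod.ext ?_ ?_
    · simp
    · simp [hsnd₄0]
  have hfives : ∀ i : Fin (n+1), h₅ i.succ = h₄ i.succ := fun i =>
    hne₅ i.succ (Fin.succ_ne_zero i)
  have final : ∀ v, TL h₅ v = (TL w (Fin.tail v), ((v 0 : ℤ) : ZMod k)) := by
    intro v
    refine Prod.ext ?_ ?_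
    · rw [fst_TL, Fin.sum_univ_succ, hfive0]
      simp only [hfives]
      rw [TL_apply]
      simp [Fin.tail, hw]
    · rw [snd_TL, Fin.sum_univ_succ, hfive0]
      have : ∀ i : Fin (n+1), v i.succ • (h₅ i.succ).2 = 0 := fun i => by
        rw [hfives, hsnd₄rest _ (Fin.succ_ne_zero i), smul_zero]
      simp [this, zsmul_eq_mul]
  obtain ⟨F, hF⟩ := ((((e₁.trans e₂).trans e₃).trans e₄)).trans e₅
  exact ⟨w, F, hwsurj, fun v => (hF v).symm.trans (final (F v))⟩

end Reduce



/-- dependent succ splitting of a finite product, additively. -/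
def piSuccAddEquiv {n : ℕ} (M : Fin (n+1) → Type*) [∀ i, AddCommMonoid (M i)] :
    ((i : Fin (n+1)) → M i) ≃+ M 0 × ((i : Fin n) → M i.succ) where
  toFun f := (f 0, fun i => f i.succ)
  invFun x := Fin.cons x.1 x.2
  left_inv f := Fin.cons_self_tail f
  right_inv x := by
    refine Prod.ext ?_ ?_
    · simp
    · funext i; simp
  map_add' f g := rfl

/-- shuffle. -/
def shuffle (A B C D : Type*) [AddCommMonoid A] [AddCommMonoid B] [AddCommMonoid C]
    [AddCommMonoid D] : A × (B × (C × D)) ≃+ (B × C) × (A × D) where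
  toFun x := ((x.2.1, x.2.2.1), (x.1, x.2.2.2))
  invFun y := (y.2.1, (y.1.1, (y.1.2, y.2.2)))
  left_inv _ := rfl
  right_inv _ := rfl
  map_add' _ _ := rfl

lemma zmod_ann {a m : ℕ} (h : a ∣ m) (x : ZMod a) : (m : ℤ) • x = 0 := by
  rw [natCast_zsmul, nsmul_eq_mul]
  rw [(ZMod.natCast_eq_zero_iff m a).mpr h, zero_mul]

lemma splitfin : ∀ (m : ℕ) (p e : Fin m → ℕ), (∀ i, (p i).Prime) →
    ∃ (k : ℕ) (G : Type) (_ : AddCommGroup G)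
      (_E : ((i : Fin m) → ZMod (p i ^ e i)) ≃+ G × ZMod k),
      k ≠ 0 ∧ (∀ i, p i ^ e i ∣ k) ∧ (∀ x : G, (k : ℤ) • x = 0) := by
  intro m
  induction m with
  | zero =>
    intro p e _
    haveI : Subsingleton (ZMod 1) := inferInstanceAs (Subsingleton (Fin 1))
    refine ⟨1, PUnit, inferInstance,
      ⟨⟨fun _ => (PUnit.unit, 0), fun _ i => i.elim0, fun f => funext fun i => i.elim0,
        fun x => Prod.ext (Subsingleton.elim _ _) (Subsingleton.elim _ _)⟩,
        fun _ _ => Prod.ext (Subsingleton.elim _ _) (Subsingleton.elim _ _)⟩,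
      one_ne_zero, fun i => i.elim0, fun x => Subsingleton.elim _ _⟩
  | succ m ih =>
    intro p e hp
    obtain ⟨k', G', instG', E', hk'0, hdvd', hann'⟩ :=
      ih (fun i => p i.succ) (fun i => e i.succ) (fun i => hp i.succ)
    set a := p 0 ^ e 0 with ha
    have ha0 : a ≠ 0 := pow_ne_zero _ (hp 0).pos.ne'
    have hsplit : ((i : Fin (m+1)) → ZMod (p i ^ e i)) ≃+ ZMod a × (G' × ZMod k') :=
      (piSuccAddEquiv _).trans ((AddEquiv.refl _).prodCongr E')
    by_cases hdv : a ∣ k'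
    · refine ⟨k', ZMod a × G', inferInstance,
        hsplit.trans ((AddEquiv.prodAssoc : (ZMod a × G') × ZMod k' ≃+ ZMod a × (G' × ZMod k')).symm), hk'0, ?_, ?_⟩
      · intro i
        refine Fin.cases ?_ (fun i => hdvd' i) i
        exact hdv
      · intro x
        refine Prod.ext ?_ ?_
        · rw [Prod.smul_fst]; exact zmod_ann hdv x.1
        · rw [Prod.smul_snd]; exact hann' x.2
    · set v := k'.factorization (p 0) with hv
      set R := ordCompl[p 0] k' with hR
      have hvRk : p 0 ^ v * R = k' := Nat.ordProj_mul_ordCompl_eq_self k' (p 0)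
      have hvlt : v < e 0 := by
        by_contra hle
        push_neg at hle
        exact hdv ((pow_dvd_pow _ hle).trans (Nat.ordProj_dvd k' (p 0)))
      have hcop1 : Nat.Coprime (p 0 ^ v) R :=
        Nat.Coprime.pow_left _ (Nat.coprime_ordCompl (hp 0) hk'0)
      have hcop2 : Nat.Coprime a R :=
        Nat.Coprime.pow_left _ (Nat.coprime_ordCompl (hp 0) hk'0)
      have E2 : ZMod k' ≃+ ZMod (p 0 ^ v) × ZMod R := by
        rw [← hvRk]
        exact (ZMod.chineseRemainder hcop1).toAddEquiv
      have E3 : ZMod (a * R) ≃+ ZMod a × ZMod R := (ZMod.chineseRemainder hcop2).toAddEquiv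
      have hk'dvd : k' ∣ a * R := by
        rw [← hvRk]
        exact mul_dvd_mul (pow_dvd_pow _ hvlt.le) dvd_rfl
      refine ⟨a * R, G' × ZMod (p 0 ^ v), inferInstance,
        hsplit.trans (((AddEquiv.refl (ZMod a)).prodCongr
          ((AddEquiv.refl G').prodCongr E2)).trans ((shuffle _ _ _ _).trans
          ((AddEquiv.refl _).prodCongr E3.symm))), ?_, ?_, ?_⟩
      · exact mul_ne_zero ha0 (Nat.ordCompl_pos (p 0) hk'0).ne'
      · intro i
        refine Fin.cases ?_ (fun i => (hdvd' i).trans hk'dvd) i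
        exact dvd_mul_right a R
      · intro x
        refine Prod.ext ?_ ?_
        · rw [Prod.smul_fst]
          obtain ⟨t, ht⟩ := hk'dvd
          rw [ht]
          push_cast
          rw [mul_smul, hann']
          simp
        · rw [Prod.smul_snd]
          exact zmod_ann ((pow_dvd_pow _ hvlt.le).trans (dvd_mul_right a R)) x.2


/-- drop a subsingleton factor. -/
def dropUnique (U B : Type*) [AddCommMonoid U] [Subsingleton U] [AddCommMonoid B] :
    U × B ≃+ B where
  toFun := Prod.snd
  invFun b := (0, b)
  left_inv x := Prod.ext (Subsingleton.elim _ _) rfl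
  right_inv b := rfl
  map_add' _ _ := rfl

/-- swap out the head ℤ factor. -/
def shuffleFree (A C B : Type*) [AddCommMonoid A] [AddCommMonoid B] [AddCommMonoid C] :
    (A × C) × B ≃+ (C × B) × A where
  toFun x := ((x.1.2, x.2), x.1.1)
  invFun y := ((y.2, y.1.1), y.1.2)
  left_inv _ := rfl
  right_inv _ := rfl
  map_add' _ _ := rfl

/-- reindexing a dependent product of add monoids. -/
def piReindex {α β : Type*} (P : α → Type*) [∀ a, AddCommMonoid (P a)] (σ : α ≃ β) :
    ((a : α) → P a) ≃+ ((b : β) → P (σ.symm b)) :=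
  { Equiv.piCongrLeft' P σ with map_add' := fun f g => rfl }

lemma split (H : Type) [AddCommGroup H] (hfg : AddGroup.FG H) :
    ∃ (k : ℕ) (G : Type) (_ : AddCommGroup G) (_E : H ≃+ G × ZMod k),
      ∀ x : G, (k : ℤ) • x = 0 := by
  haveI := hfg
  obtain ⟨n, ι, fι, p, hp, e, ⟨E0⟩⟩ := AddCommGroup.equiv_free_prod_directSum_zmod H
  haveI := fι
  have E1 : (⨁ i : ι, ZMod (p i ^ e i)) ≃+ ((i : ι) → ZMod (p i ^ e i)) :=
    DirectSum.addEquivProd _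
  set σ : ι ≃ Fin (Fintype.card ι) := Fintype.equivFin ι with hσ
  have E2 : ((i : ι) → ZMod (p i ^ e i)) ≃+
      ((j : Fin (Fintype.card ι)) → ZMod (p (σ.symm j) ^ e (σ.symm j))) :=
    piReindex _ σ
  obtain ⟨k, G, instG, E3, hk0, hdvd, hann⟩ := splitfin (Fintype.card ι)
    (fun j => p (σ.symm j)) (fun j => e (σ.symm j)) (fun j => hp (σ.symm j))
  have EB : (⨁ i : ι, ZMod (p i ^ e i)) ≃+ G × ZMod k := (E1.trans E2).trans E3
  match n, E0 with
  | 0, E0 =>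
    haveI : Subsingleton (Fin 0 →₀ ℤ) := ⟨fun a b => Finsupp.ext fun i => i.elim0⟩
    exact ⟨k, G, instG, (E0.trans (dropUnique _ _)).trans EB, hann⟩
  | (m'+1), E0 =>
    refine ⟨0, (Fin m' → ℤ) × (⨁ i : ι, ZMod (p i ^ e i)), inferInstance, ?_, ?_⟩
    · exact (((E0.trans ((Finsupp.addEquivFunOnFinite).prodCongr (AddEquiv.refl _))).trans
        ((piSuccAddEquiv (fun _ => ℤ)).prodCongr (AddEquiv.refl _))).trans
        (shuffleFree ℤ (Fin m' → ℤ) _))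
    · intro x
      simp


/-- extend an automorphism of `ℤ^n` to `ℤ^{n+1}` fixing coordinate 0. -/
def extEquiv {n : ℕ} (f : (Fin n → ℤ) ≃ₗ[ℤ] (Fin n → ℤ)) :
    (Fin (n+1) → ℤ) ≃ₗ[ℤ] (Fin (n+1) → ℤ) where
  toFun v := Fin.cons (v 0) (f (Fin.tail v))
  invFun v := Fin.cons (v 0) (f.symm (Fin.tail v))
  map_add' v w := by
    have ht : Fin.tail (v + w) = Fin.tail v + Fin.tail w := rfl
    funext j
    refine Fin.cases ?_ (fun i => ?_) j
    · simp
    · simp [ht, map_add]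
  map_smul' c v := by
    have ht : Fin.tail (c • v) = c • Fin.tail v := rfl
    funext j
    refine Fin.cases ?_ (fun i => ?_) j
    · simp
    · simp only [Fin.cons_succ, RingHom.id_apply, Pi.smul_apply, smul_eq_mul]
      rw [ht, map_smul]
      simp
  left_inv v := by
    simp [Fin.cons_self_tail]
  right_inv v := by
    simp [Fin.cons_self_tail]

@[simp] lemma extEquiv_apply_zero {n : ℕ} (f : (Fin n → ℤ) ≃ₗ[ℤ] (Fin n → ℤ))
    (v : Fin (n+1) → ℤ) : extEquiv f v 0 = v 0 := rfl

lemma extEquiv_tail {n : ℕ} (f : (Fin n → ℤ) ≃ₗ[ℤ] (Fin n → ℤ)) (v : Fin (n+1) → ℤ) :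
    Fin.tail (extEquiv f v) = f (Fin.tail v) := by
  funext i
  simp [extEquiv, Fin.tail]

lemma finset_tuple {m : ℕ} (s : Finset H) (hs : Submodule.span ℤ (s : Set H) = ⊤)
    (hcard : s.card ≤ m) : ∃ t : Fin m → H, Function.Surjective (TL t) := by
  set L := s.toList with hL
  refine ⟨fun i => L.getD i 0, ?_⟩
  have hsub : (s : Set H) ⊆ Set.range (fun i : Fin m => L.getD i 0) := by
    intro x hx
    have hxL : x ∈ L := by
      rw [hL]
      exact Finset.mem_toList.mpr hx
    obtain ⟨idx, hidx, hval⟩ := List.mem_iff_getElem.mp hxL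
    have hlen : L.length = s.card := Finset.length_toList s
    refine ⟨⟨idx, by omega⟩, ?_⟩
    show L.getD idx 0 = x
    rw [List.getD_eq_getElem _ _ hidx]
    exact hval
  have hspan : Submodule.span ℤ (Set.range (fun i : Fin m => L.getD i 0)) = ⊤ :=
    top_unique (hs ▸ Submodule.span_mono hsub)
  intro x
  have hx : x ∈ Submodule.span ℤ (Set.range (fun i : Fin m => L.getD i 0)) := by
    rw [hspan]; trivial
  obtain ⟨c, hc⟩ := (Submodule.mem_span_range_iff_exists_fun ℤ).mp hx
  exact ⟨c, hc⟩

lemma tuple_finset {G : Type} [AddCommGroup G] {m : ℕ} (w : Fin m → G)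
    (hw : Function.Surjective (TL w)) :
    ∃ sG : Finset G, Submodule.span ℤ (sG : Set G) = ⊤ ∧ sG.card ≤ m := by
  classical
  refine ⟨Finset.image w Finset.univ, ?_, (Finset.card_image_le).trans (by simp)⟩
  rw [eq_top_iff]
  intro x _
  obtain ⟨c, rfl⟩ := hw x
  rw [TL_apply]
  exact Submodule.sum_mem _ fun j _ => Submodule.smul_mem _ _ (Submodule.subset_span (by simp))

theorem main : ∀ (g : ℕ) (H : Type) (instH : AddCommGroup H)
    (π π' : (Fin g → ℤ) →+ H),
    Function.Surjective π → Function.Surjective π' →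
    (∃ s : Finset H, Submodule.span ℤ (s : Set H) = ⊤ ∧ s.card < g) →
    ∃ f : (Fin g → ℤ) ≃ₗ[ℤ] (Fin g → ℤ), ∀ v, π' (f v) = π v := by
  intro g
  induction g with
  | zero =>
    intro H instH π π' hπ hπ' hg
    obtain ⟨s, hs, hcard⟩ := hg
    exact absurd hcard (by omega)
  | succ n IH =>
    intro H instH π π' hπ hπ' hg
    obtain ⟨s, hs, hcard⟩ := hg
    by_cases hsub : Subsingleton H
    · exact ⟨LinearEquiv.refl ℤ _, fun v => Subsingleton.elim _ _⟩
    have hzero : ∀ x : H, x = 0 → True := fun _ _ => trivial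
    have hsne : s.Nonempty := by
      rcases Finset.eq_empty_or_nonempty s with rfl | h
      · exfalso
        apply hsub
        have hbot : (⊥ : Submodule ℤ H) = ⊤ := by
          rw [← Submodule.span_empty (R := ℤ) (M := H)]
          simpa using hs
        refine ⟨fun a b => ?_⟩
        have ha : a ∈ (⊥ : Submodule ℤ H) := by rw [hbot]; trivial
        have hb : b ∈ (⊥ : Submodule ℤ H) := by rw [hbot]; trivial
        rw [Submodule.mem_bot] at ha hb
        rw [ha, hb]
      · exact h
    have hn1 : 1 ≤ s.card := Finset.card_pos.mpr hsne
    obtain ⟨m, rfl⟩ : ∃ m, n = m + 1 := ⟨n - 1, by omega⟩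
    -- H is finitely generated
    have hfin : Module.Finite ℤ H := ⟨⟨s, hs⟩⟩
    have hfg : AddGroup.FG H := Module.Finite.iff_addGroup_fg.mp hfin
    obtain ⟨k, G, instG, E, hann⟩ := split H hfg
    -- transported tuples
    have hTL : ∀ (ρ : (Fin (m+2) → ℤ) →+ H) (v : Fin (m+2) → ℤ),
        TL (fun j => E (ρ (Pi.single j 1))) v = E (ρ v) := by
      intro ρ v
      rw [TL_apply, ← TL_pi ρ v, TL_apply, map_sum]
      refine Finset.sum_congr rfl fun j _ => ?_
      rw [map_zsmul]
    have hsurj1 : Function.Surjective (TL (fun j => E (π (Pi.single j 1)))) := by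
      intro x
      obtain ⟨v, hv⟩ := hπ (E.symm x)
      exact ⟨v, by rw [hTL, hv, AddEquiv.apply_symm_apply]⟩
    have hsurj2 : Function.Surjective (TL (fun j => E (π' (Pi.single j 1)))) := by
      intro x
      obtain ⟨v, hv⟩ := hπ' (E.symm x)
      exact ⟨v, by rw [hTL, hv, AddEquiv.apply_symm_apply]⟩
    obtain ⟨w, F, hwsurj, hform⟩ := reduce2 hann _ hsurj1
    obtain ⟨w', F', hw'surj, hform'⟩ := reduce2 hann _ hsurj2
    -- generating set for G of size ≤ m
    obtain ⟨t, htsurj⟩ := finset_tuple s hs (by omega : s.card ≤ m + 1)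
    have htEsurj : Function.Surjective (TL (fun j => E (t j))) := by
      have h1 : ∀ v, TL (fun j : Fin (m+1) => E (t j)) v = E (TL t v) := by
        intro v
        rw [TL_apply, TL_apply, map_sum]
        refine Finset.sum_congr rfl fun j _ => ?_
        rw [map_zsmul]
      intro x
      obtain ⟨v, hv⟩ := htsurj (E.symm x)
      exact ⟨v, by rw [h1, hv, AddEquiv.apply_symm_apply]⟩
    obtain ⟨wS, hwSsurj⟩ := reduce1 hann _ htEsurj
    obtain ⟨sG, hsG, hsGcard⟩ := tuple_finset wS hwSsurj
    -- apply induction hypothesis to G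
    obtain ⟨f₀, hf₀⟩ := IH G instG (TL w).toAddMonoidHom (TL w').toAddMonoidHom
      hwsurj hw'surj ⟨sG, hsG, by omega⟩
    -- glue
    refine ⟨F.trans ((extEquiv f₀).trans F'.symm), ?_⟩
    intro v
    apply E.injective
    have e1 : E (π' (F'.symm (extEquiv f₀ (F v)))) =
        TL (fun j => E (π' (Pi.single j 1))) (F'.symm (extEquiv f₀ (F v))) := (hTL π' _).symm
    have e2 := hform' (F'.symm (extEquiv f₀ (F v)))
    rw [LinearEquiv.apply_symm_apply] at e2
    have e3 : Fin.tail (extEquiv f₀ (F v)) = f₀ (Fin.tail (F v)) := extEquiv_tail f₀ (F v)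
    have e4 : (extEquiv f₀ (F v)) 0 = (F v) 0 := rfl
    rw [e3, e4] at e2
    have e5 : TL w' (f₀ (Fin.tail (F v))) = TL w (Fin.tail (F v)) := hf₀ (Fin.tail (F v))
    rw [e5] at e2
    have e6 := hform v
    rw [hTL π v] at e6
    show E (π' ((F.trans ((extEquiv f₀).trans F'.symm)) v)) = E (π v)
    rw [LinearEquiv.trans_apply, LinearEquiv.trans_apply]
    rw [e1, e2, ← e6]


end Stmt5

/-- Let `H` be a finitely generated abelian group, and let `π, π'` be two
surjections onto `H` from the free abelian group of the same rank `g`, with `g` strictly greater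
than the rank of `H` (the minimal number of cyclic summands, expressed by the existence of a
generating set of cardinality `< g`).  Then the presentations are equivalent: there is an
automorphism `f` of the free abelian group with `π' ∘ f = π`. -/
theorem stmt_5 (g : ℕ) (H : Type) [AddCommGroup H]
    (π π' : (Fin g → ℤ) →+ H) (hπ : Function.Surjective π) (hπ' : Function.Surjective π')
    (hg : ∃ s : Finset H, Submodule.span ℤ (s : Set H) = ⊤ ∧ s.card < g) :
    ∃ f : (Fin g → ℤ) ≃ₗ[ℤ] (Fin g → ℤ), ∀ v, π' (f v) = π v := by
  exact Stmt5.main g H ‹_› π π' hπ hπ' hg
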